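/- arXiv:1810.05042 — 4 statements merged into one kernel-verified Lean document; each statement's English description precedes it below -/
import Mathlib

section
/- Let ε_i, ε_j, ε_{j'} be three mutually independent random vectors in ℝ^p with i.i.d. N(0,σ²) coordinates, let c_{ij}, c_{ij'} ∈ ℝ^p be fixed vectors, and set A_{ij} = ‖c_{ij} + ε_i − ε_j‖₂, A_{ij'} = ‖c_{ij'} + ε_i − ε_{j'}‖₂, λ_{ij} = ‖c_{ij}‖₂/(√2 σ), λ_{ij'} = ‖c_{ij'}‖₂/(√2 σ). Then E(A_{ij}² A_{ij'}²) ≤ 4σ⁴ √( [ (p + λ_{ij}²)² + 2(p + 2λ_{ij}²) ] · [ (p + λ_{ij'}²)² + 2(p + 2λ_{ij'}²) ] ). -/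
open MeasureTheory ProbabilityTheory
open scoped NNReal ENNReal

section Aux
open Real

lemma my_integrable_pow_mul_exp {b : ℝ} (hb : 0 < b) (n : ℕ) :
    Integrable (fun x : ℝ => x ^ n * Real.exp (-b * x ^ 2)) := by
  have h := integrable_rpow_mul_exp_neg_mul_sq hb (s := (n : ℝ)) (lt_of_lt_of_le neg_one_lt_zero (Nat.cast_nonneg n))
  simpa [Real.rpow_natCast] using h

lemma my_gauss_rec {b : ℝ} (hb : 0 < b) (n : ℕ) :
    ∫ x : ℝ, x ^ (n + 2) * Real.exp (-b * x ^ 2)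
      = ((n + 1 : ℝ) / (2 * b)) * ∫ x : ℝ, x ^ n * Real.exp (-b * x ^ 2) := by
  have hu : ∀ x : ℝ, HasDerivAt (fun y : ℝ => y ^ (n + 1)) ((n + 1 : ℝ) * x ^ n) x := by
    intro x
    simpa using hasDerivAt_pow (n + 1) x
  have hv : ∀ x : ℝ, HasDerivAt (fun y : ℝ => -Real.exp (-b * y ^ 2) / (2 * b))
      (x * Real.exp (-b * x ^ 2)) x := by
    intro x
    have h1 : HasDerivAt (fun y : ℝ => -b * y ^ 2) (-b * (2 * x)) x := by
      simpa using (hasDerivAt_pow 2 x).const_mul (-b)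
    have h2 := (h1.exp).neg.div_const (2 * b)
    refine h2.congr_deriv ?_
    field_simp [hb.ne']
  have huv' : Integrable (fun x : ℝ => x ^ (n + 1) * (x * Real.exp (-b * x ^ 2))) := by
    have := my_integrable_pow_mul_exp hb (n + 2)
    apply this.congr
    filter_upwards with x; ring
  have hu'v : Integrable (fun x : ℝ => ((n + 1 : ℝ) * x ^ n) * (-Real.exp (-b * x ^ 2) / (2 * b))) := by
    have := ((my_integrable_pow_mul_exp hb n).const_mul ((n + 1 : ℝ) * (-1 / (2 * b))))
    apply this.congr
    filter_upwards with x; ring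
  have huv : Integrable (fun x : ℝ => x ^ (n + 1) * (-Real.exp (-b * x ^ 2) / (2 * b))) := by
    have := ((my_integrable_pow_mul_exp hb (n + 1)).const_mul (-1 / (2 * b)))
    apply this.congr
    filter_upwards with x; ring
  have h := MeasureTheory.integral_mul_deriv_eq_deriv_mul_of_integrable (fun x _ => hu x) (fun x _ => hv x) huv' hu'v huv
  have e1 : ∫ x : ℝ, x ^ (n + 1) * (x * Real.exp (-b * x ^ 2))
      = ∫ x : ℝ, x ^ (n + 2) * Real.exp (-b * x ^ 2) := by
    congr 1; funext x; ring
  have e2 : ∫ x : ℝ, ((n + 1 : ℝ) * x ^ n) * (-Real.exp (-b * x ^ 2) / (2 * b))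
      = ((n + 1 : ℝ) * (-1 / (2 * b))) * ∫ x : ℝ, x ^ n * Real.exp (-b * x ^ 2) := by
    rw [← integral_const_mul]
    congr 1; funext x; ring
  rw [e1, e2] at h
  rw [h]; ring

lemma my_gauss_odd {b : ℝ} {n : ℕ} (hn : Odd n) :
    ∫ x : ℝ, x ^ n * Real.exp (-b * x ^ 2) = 0 := by
  have h := integral_neg_eq_self (fun x : ℝ => x ^ n * Real.exp (-b * x ^ 2)) volume
  have h2 : ∫ x : ℝ, (-x) ^ n * Real.exp (-b * (-x) ^ 2)
      = - ∫ x : ℝ, x ^ n * Real.exp (-b * x ^ 2) := by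
    rw [← integral_neg]
    congr 1; funext x
    rw [hn.neg_pow]; ring_nf
  rw [h2] at h
  linarith


section GR
variable {v : ℝ≥0}

lemma my_pdf_eq (x : ℝ) : gaussianPDFReal 0 v x
    = (Real.sqrt (2 * Real.pi * v))⁻¹ * Real.exp (-(2 * (v : ℝ))⁻¹ * x ^ 2) := by
  rw [gaussianPDFReal]
  norm_num
  left
  field_simp

lemma my_integral_gaussianReal (hv : v ≠ 0) (g : ℝ → ℝ) (hg : Measurable g) :
    ∫ x, g x ∂(gaussianReal 0 v) = ∫ x, gaussianPDFReal 0 v x * g x := by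
  rw [gaussianReal_of_var_ne_zero _ hv, gaussianPDF_def]
  have : (fun x => ENNReal.ofReal (gaussianPDFReal 0 v x))
      = fun x => ((gaussianPDFReal 0 v x).toNNReal : ℝ≥0∞) := rfl
  rw [this, integral_withDensity_eq_integral_smul
      ((measurable_gaussianPDFReal 0 v).real_toNNReal) g]
  congr 1; funext x
  simp [NNReal.smul_def, Real.coe_toNNReal _ (gaussianPDFReal_nonneg 0 v x)]

lemma my_integrable_gaussianReal_iff (hv : v ≠ 0) (g : ℝ → ℝ) (hg : Measurable g) :
    Integrable g (gaussianReal 0 v) ↔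
      Integrable (fun x => gaussianPDFReal 0 v x * g x) volume := by
  rw [gaussianReal_of_var_ne_zero _ hv, gaussianPDF_def]
  have : (fun x => ENNReal.ofReal (gaussianPDFReal 0 v x))
      = fun x => ((gaussianPDFReal 0 v x).toNNReal : ℝ≥0∞) := rfl
  rw [this, integrable_withDensity_iff_integrable_smul
      ((measurable_gaussianPDFReal 0 v).real_toNNReal)]
  constructor <;> intro h <;> apply h.congr <;> filter_upwards with x <;>
    simp [NNReal.smul_def, Real.coe_toNNReal _ (gaussianPDFReal_nonneg 0 v x)]

lemma my_integrable_pow_gaussianReal (hv : v ≠ 0) (n : ℕ) :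
    Integrable (fun x => x ^ n) (gaussianReal 0 v) := by
  have hvpos : (0 : ℝ) < v := lt_of_le_of_ne v.coe_nonneg (by exact_mod_cast hv.symm)
  rw [my_integrable_gaussianReal_iff hv _ (by fun_prop : Measurable fun x : ℝ => x ^ n)]
  have h := (my_integrable_pow_mul_exp (b := (2 * (v : ℝ))⁻¹) (by positivity) n).const_mul
    ((Real.sqrt (2 * Real.pi * v))⁻¹)
  apply h.congr
  filter_upwards with x
  rw [my_pdf_eq]; ring

lemma my_pdf_int (hv : v ≠ 0) (n : ℕ) : ∫ x, x ^ n ∂(gaussianReal 0 v)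
    = (Real.sqrt (2 * Real.pi * v))⁻¹ * ∫ x : ℝ, x ^ n * Real.exp (-(2 * (v : ℝ))⁻¹ * x ^ 2) := by
  rw [my_integral_gaussianReal hv _ (by fun_prop : Measurable fun x : ℝ => x ^ n), ← integral_const_mul]
  congr 1; funext x; rw [my_pdf_eq]; ring

lemma my_g0 : ∫ x, x ^ 0 ∂(gaussianReal 0 v) = 1 := by simp

lemma my_g1 (hv : v ≠ 0) : ∫ x, x ^ 1 ∂(gaussianReal 0 v) = 0 := by
  rw [my_pdf_int hv 1, my_gauss_odd odd_one, mul_zero]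

lemma my_g3 (hv : v ≠ 0) : ∫ x, x ^ 3 ∂(gaussianReal 0 v) = 0 := by
  rw [my_pdf_int hv 3, my_gauss_odd (by decide), mul_zero]

lemma my_g2 (hv : v ≠ 0) : ∫ x, x ^ 2 ∂(gaussianReal 0 v) = v := by
  have hvpos : (0 : ℝ) < v := lt_of_le_of_ne v.coe_nonneg (by exact_mod_cast hv.symm)
  have h0 : ∫ x, (x : ℝ) ^ 0 ∂(gaussianReal 0 v) = 1 := my_g0
  rw [my_pdf_int hv 0] at h0
  have h2 := my_gauss_rec (b := (2 * (v : ℝ))⁻¹) (by positivity) 0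
  rw [my_pdf_int hv 2]
  rw [show (0 + 2) = 2 from rfl] at h2
  rw [h2]
  have : ((0 : ℕ) + 1 : ℝ) / (2 * (2 * (v : ℝ))⁻¹) = v := by
    push_cast; field_simp
    norm_num
  rw [this]
  nlinarith [h0]

lemma my_g4 (hv : v ≠ 0) : ∫ x, x ^ 4 ∂(gaussianReal 0 v) = 3 * (v : ℝ) ^ 2 := by
  have hvpos : (0 : ℝ) < v := lt_of_le_of_ne v.coe_nonneg (by exact_mod_cast hv.symm)
  have h2 : ∫ x, (x : ℝ) ^ 2 ∂(gaussianReal 0 v) = v := my_g2 hv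
  rw [my_pdf_int hv 2] at h2
  have h4 := my_gauss_rec (b := (2 * (v : ℝ))⁻¹) (by positivity) 2
  rw [my_pdf_int hv 4]
  rw [show (2 + 2) = 4 from rfl] at h4
  rw [h4]
  have : ((2 : ℕ) + 1 : ℝ) / (2 * (2 * (v : ℝ))⁻¹) = 3 * v := by
    push_cast; field_simp; ring
  rw [this]
  nlinarith [h2]

end GR

section RV

variable {Ω : Type*} [MeasurableSpace Ω] {P : Measure Ω} [IsProbabilityMeasure P] {v : ℝ≥0}

lemma my_rv_pow_integrable (hv : v ≠ 0) {X : Ω → ℝ} (hX : Measurable X)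
    (hmap : Measure.map X P = gaussianReal 0 v) (n : ℕ) :
    Integrable (fun ω => X ω ^ n) P := by
  have h := my_integrable_pow_gaussianReal hv n
  rw [← hmap] at h
  exact (integrable_map_measure ((measurable_id.pow_const n).aestronglyMeasurable) hX.aemeasurable).mp h

lemma my_rv_pow_integral {X : Ω → ℝ} (hX : Measurable X)
    (hmap : Measure.map X P = gaussianReal 0 v) (n : ℕ) :
    ∫ ω, X ω ^ n ∂P = ∫ x, x ^ n ∂(gaussianReal 0 v) := by
  rw [← hmap]
  exact (integral_map (f := fun x : ℝ => x ^ n) hX.aemeasurable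
    ((measurable_id.pow_const n).aestronglyMeasurable)).symm

lemma my_key (hv : v ≠ 0) {U V : Ω → ℝ} (hU : Measurable U) (hV : Measurable V)
    (hUV : IndepFun U V P)
    (hmU : Measure.map U P = gaussianReal 0 v) (hmV : Measure.map V P = gaussianReal 0 v)
    (c : ℝ) :
    Integrable (fun ω => (c + U ω - V ω) ^ 2) P ∧
    Integrable (fun ω => (c + U ω - V ω) ^ 4) P ∧
    ∫ ω, (c + U ω - V ω) ^ 2 ∂P = c ^ 2 + 2 * v ∧
    ∫ ω, (c + U ω - V ω) ^ 4 ∂P = c ^ 4 + 12 * v * c ^ 2 + 12 * (v : ℝ) ^ 2 := by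
  set M : ℕ → ℝ := fun n => ∫ x, x ^ n ∂(gaussianReal 0 v) with hM
  have T : ∀ (r : ℝ) (a b : ℕ), Integrable (fun ω => r * (U ω ^ a * V ω ^ b)) P ∧
      ∫ ω, r * (U ω ^ a * V ω ^ b) ∂P = r * (M a * M b) := by
    intro r a b
    have hia : Integrable (fun ω => U ω ^ a) P := my_rv_pow_integrable hv hU hmU a
    have hib : Integrable (fun ω => V ω ^ b) P := my_rv_pow_integrable hv hV hmV b
    have hab : IndepFun (fun ω => U ω ^ a) (fun ω => V ω ^ b) P :=
      hUV.comp (by fun_prop : Measurable fun x : ℝ => x ^ a) (by fun_prop : Measurable fun x : ℝ => x ^ b)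
    have hint : Integrable (fun ω => U ω ^ a * V ω ^ b) P := hab.integrable_mul hia hib
    have hval : ∫ ω, U ω ^ a * V ω ^ b ∂P = M a * M b := by
      have h := hab.integral_fun_mul_eq_mul_integral hia.aestronglyMeasurable hib.aestronglyMeasurable
      calc ∫ ω, U ω ^ a * V ω ^ b ∂P = (∫ ω, U ω ^ a ∂P) * ∫ ω, V ω ^ b ∂P := h
        _ = M a * M b := by rw [my_rv_pow_integral hU hmU a, my_rv_pow_integral hV hmV b]
    exact ⟨hint.const_mul r, by rw [integral_const_mul, hval]⟩
  have comb : ∀ {f g : Ω → ℝ} {x y : ℝ},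
      (Integrable f P ∧ ∫ ω, f ω ∂P = x) → (Integrable g P ∧ ∫ ω, g ω ∂P = y) →
      (Integrable (fun ω => f ω + g ω) P ∧ ∫ ω, f ω + g ω ∂P = x + y) := by
    intro f g x y hf hg
    exact ⟨hf.1.add hg.1, by rw [integral_add hf.1 hg.1, hf.2, hg.2]⟩
  have hM0 : M 0 = 1 := my_g0
  have hM1 : M 1 = 0 := my_g1 hv
  have hM2 : M 2 = v := my_g2 hv
  have hM3 : M 3 = 0 := my_g3 hv
  have hM4 : M 4 = 3 * (v : ℝ) ^ 2 := my_g4 hv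
  have e2 : (fun ω => (c + U ω - V ω) ^ 2) = fun ω =>
      c ^ 2 * (U ω ^ 0 * V ω ^ 0) + (2 * c) * (U ω ^ 1 * V ω ^ 0)
        + (-(2 * c)) * (U ω ^ 0 * V ω ^ 1) + 1 * (U ω ^ 2 * V ω ^ 0)
        + 1 * (U ω ^ 0 * V ω ^ 2) + (-2) * (U ω ^ 1 * V ω ^ 1) := by
    funext ω; ring
  have h2 := comb (comb (comb (comb (comb (T (c ^ 2) 0 0) (T (2 * c) 1 0))
    (T (-(2 * c)) 0 1)) (T 1 2 0)) (T 1 0 2)) (T (-2) 1 1)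
  have e4 : (fun ω => (c + U ω - V ω) ^ 4) = fun ω =>
      c ^ 4 * (U ω ^ 0 * V ω ^ 0) + (4 * c ^ 3) * (U ω ^ 1 * V ω ^ 0)
        + (-(4 * c ^ 3)) * (U ω ^ 0 * V ω ^ 1) + (6 * c ^ 2) * (U ω ^ 2 * V ω ^ 0)
        + (6 * c ^ 2) * (U ω ^ 0 * V ω ^ 2) + (-(12 * c ^ 2)) * (U ω ^ 1 * V ω ^ 1)
        + (4 * c) * (U ω ^ 3 * V ω ^ 0) + (-(4 * c)) * (U ω ^ 0 * V ω ^ 3)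
        + (-(12 * c)) * (U ω ^ 2 * V ω ^ 1) + (12 * c) * (U ω ^ 1 * V ω ^ 2)
        + 1 * (U ω ^ 4 * V ω ^ 0) + 1 * (U ω ^ 0 * V ω ^ 4)
        + (-4) * (U ω ^ 3 * V ω ^ 1) + (-4) * (U ω ^ 1 * V ω ^ 3)
        + 6 * (U ω ^ 2 * V ω ^ 2) := by
    funext ω; ring
  have h4 := comb (comb (comb (comb (comb (comb (comb (comb (comb (comb (comb (comb (comb (comb
    (T (c ^ 4) 0 0) (T (4 * c ^ 3) 1 0)) (T (-(4 * c ^ 3)) 0 1)) (T (6 * c ^ 2) 2 0))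
    (T (6 * c ^ 2) 0 2)) (T (-(12 * c ^ 2)) 1 1)) (T (4 * c) 3 0)) (T (-(4 * c)) 0 3))
    (T (-(12 * c)) 2 1)) (T (12 * c) 1 2)) (T 1 4 0)) (T 1 0 4)) (T (-4) 3 1)) (T (-4) 1 3))
    (T 6 2 2)
  refine ⟨by rw [e2]; exact h2.1, by rw [e4]; exact h4.1, ?_, ?_⟩
  · rw [e2]
    refine h2.2.trans ?_
    rw [hM0, hM1, hM2]; ring
  · rw [e4]
    refine h4.2.trans ?_
    rw [hM0, hM1, hM2, hM3, hM4]; ring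

end RV
section Norm4

variable {Ω : Type*} [MeasurableSpace Ω] {P : Measure Ω} [IsProbabilityMeasure P]
  {p : ℕ} {σ : ℝ}

lemma my_norm4 (hσ : 0 < σ) {ε : Fin 3 → Ω → EuclideanSpace ℝ (Fin p)}
    (hmeas : ∀ i, Measurable (ε i))
    (hind : iIndepFun
      (fun q : Fin 3 × Fin p => fun ω => ε q.1 ω q.2) P)
    (hdist : ∀ i k, Measure.map (fun ω => ε i ω k) P = gaussianReal 0 ⟨σ ^ 2, sq_nonneg σ⟩)
    {i j : Fin 3} (hij : i ≠ j) (c : EuclideanSpace ℝ (Fin p)) :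
    Integrable (fun ω => ‖c + ε i ω - ε j ω‖ ^ 4) P ∧
    ∫ ω, ‖c + ε i ω - ε j ω‖ ^ 4 ∂P
      = (‖c‖ ^ 2 + 2 * p * σ ^ 2) ^ 2 + 8 * p * σ ^ 4 + 8 * σ ^ 2 * ‖c‖ ^ 2 := by
  set v : ℝ≥0 := ⟨σ ^ 2, sq_nonneg σ⟩ with hvdef
  have hv : v ≠ 0 := by
    intro h
    have : (v : ℝ) = 0 := by rw [h]; simp
    rw [hvdef] at this
    change σ ^ 2 = 0 at this
    nlinarith
  have hvσ : (v : ℝ) = σ ^ 2 := rfl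
  have hqm : ∀ q : Fin 3 × Fin p, Measurable (fun ω => ε q.1 ω q.2) :=
    fun q => (measurable_pi_apply q.2).comp ((WithLp.measurable_ofLp _ _).comp (hmeas q.1))
  set X : Fin p → Ω → ℝ := fun k ω => c k + ε i ω k - ε j ω k with hX
  have key : ∀ k : Fin p,
      Integrable (fun ω => (c k + ε i ω k - ε j ω k) ^ 2) P ∧
      Integrable (fun ω => (c k + ε i ω k - ε j ω k) ^ 4) P ∧
      ∫ ω, (c k + ε i ω k - ε j ω k) ^ 2 ∂P = c k ^ 2 + 2 * v ∧
      ∫ ω, (c k + ε i ω k - ε j ω k) ^ 4 ∂P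
        = c k ^ 4 + 12 * v * c k ^ 2 + 12 * (v : ℝ) ^ 2 := by
    intro k
    exact my_key hv (hqm (i, k)) (hqm (j, k))
      (hind.indepFun (by simp [Prod.ext_iff, hij]))
      (hdist i k) (hdist j k) (c k)
  have hnorm : ∀ ω, ‖c + ε i ω - ε j ω‖ ^ 2 = ∑ k, X k ω ^ 2 := by
    intro ω
    rw [EuclideanSpace.norm_eq, Real.sq_sqrt (by positivity)]
    congr 1; funext k
    simp [hX, Real.norm_eq_abs, sq_abs]
  have hsq : ∀ ω, ‖c + ε i ω - ε j ω‖ ^ 4 = ∑ k, ∑ l, X k ω ^ 2 * X l ω ^ 2 := by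
    intro ω
    have : ‖c + ε i ω - ε j ω‖ ^ 4 = (‖c + ε i ω - ε j ω‖ ^ 2) ^ 2 := by ring
    rw [this, hnorm, sq, Finset.sum_mul_sum]
  -- integrability and values of each cross term
  have hterm : ∀ k l : Fin p,
      Integrable (fun ω => X k ω ^ 2 * X l ω ^ 2) P ∧
      ∫ ω, X k ω ^ 2 * X l ω ^ 2 ∂P
        = if k = l then c k ^ 4 + 12 * v * c k ^ 2 + 12 * (v : ℝ) ^ 2
          else (c k ^ 2 + 2 * v) * (c l ^ 2 + 2 * v) := by
    intro k l
    by_cases hkl : k = l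
    · subst hkl
      simp only [if_pos rfl]
      constructor
      · have h := (key k).2.1
        apply h.congr
        filter_upwards with ω
        simp [hX]; ring
      · have h := (key k).2.2.2
        rw [← h]
        congr 1; funext ω; simp only [hX]; ring
    · have hpair : IndepFun (fun ω => (ε i ω k, ε j ω k)) (fun ω => (ε i ω l, ε j ω l)) P := by
        have := hind.indepFun_prodMk_prodMk hqm (i, k) (j, k) (i, l) (j, l)
          (by simp [Prod.ext_iff, hkl]) (by simp [Prod.ext_iff, hij])
          (by simp [Prod.ext_iff, hij.symm]) (by simp [Prod.ext_iff, hkl])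
        exact this
      have hXY : IndepFun (fun ω => X k ω ^ 2) (fun ω => X l ω ^ 2) P := by
        have h := hpair.comp
          (show Measurable (fun x : ℝ × ℝ => (c k + x.1 - x.2) ^ 2) by fun_prop)
          (show Measurable (fun x : ℝ × ℝ => (c l + x.1 - x.2) ^ 2) by fun_prop)
        exact h
      have hint := hXY.integrable_mul (key k).1 (key l).1
      refine ⟨hint, ?_⟩
      rw [if_neg hkl]
      have h := hXY.integral_fun_mul_eq_mul_integral (key k).1.aestronglyMeasurable (key l).1.aestronglyMeasurable
      calc ∫ ω, X k ω ^ 2 * X l ω ^ 2 ∂P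
          = (∫ ω, X k ω ^ 2 ∂P) * ∫ ω, X l ω ^ 2 ∂P := h
        _ = (c k ^ 2 + 2 * v) * (c l ^ 2 + 2 * v) := by
            rw [(key k).2.2.1, (key l).2.2.1]
  -- full integrability
  have hintsum : Integrable (fun ω => ‖c + ε i ω - ε j ω‖ ^ 4) P := by
    have h : Integrable (fun ω => ∑ k, ∑ l, X k ω ^ 2 * X l ω ^ 2) P := by
      apply integrable_finset_sum
      intro k _
      apply integrable_finset_sum
      intro l _
      exact (hterm k l).1
    exact h.congr (by filter_upwards with ω; rw [hsq ω])
  refine ⟨hintsum, ?_⟩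
  have hval : ∫ ω, ‖c + ε i ω - ε j ω‖ ^ 4 ∂P
      = ∑ k, ∑ l, ∫ ω, X k ω ^ 2 * X l ω ^ 2 ∂P := by
    rw [integral_congr_ae (ae_of_all _ hsq)]
    rw [integral_finset_sum _ (fun k _ => integrable_finset_sum _ (fun l _ => (hterm k l).1))]
    exact Finset.sum_congr rfl fun k _ =>
      integral_finset_sum _ (fun l _ => (hterm k l).1)
  rw [hval]
  -- now evaluate the double sum
  set R : Fin p → ℝ := fun k => c k ^ 2 + 2 * v with hR
  have : ∀ k l : Fin p, ∫ ω, X k ω ^ 2 * X l ω ^ 2 ∂P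
      = R k * R l + (if k = l then 8 * (v:ℝ)^2 + 8 * v * c k ^ 2 else 0) := by
    intro k l
    rw [(hterm k l).2]
    by_cases hkl : k = l
    · subst hkl; simp [hR]; ring
    · simp [hkl, hR]
  simp_rw [this]
  rw [Finset.sum_congr rfl (fun k _ => Finset.sum_add_distrib)]
  rw [Finset.sum_add_distrib]
  have h1 : ∑ k : Fin p, ∑ l : Fin p, R k * R l = (∑ k : Fin p, R k) ^ 2 := by
    rw [← Finset.sum_mul_sum]; ring
  have h2 : ∀ k : Fin p, ∑ l : Fin p, (if k = l then 8 * (v:ℝ)^2 + 8 * v * c k ^ 2 else 0)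
      = 8 * (v:ℝ)^2 + 8 * v * c k ^ 2 := by
    intro k
    rw [Finset.sum_ite_eq]
    simp
  rw [Finset.sum_congr rfl (fun k _ => h2 k)]
  have hS : ∑ k, c k ^ 2 = ‖c‖ ^ 2 := by
    rw [EuclideanSpace.norm_eq, Real.sq_sqrt (by positivity)]
    exact Finset.sum_congr rfl fun k _ => by rw [Real.norm_eq_abs, sq_abs]
  have hRsum : ∑ k : Fin p, R k = ‖c‖ ^ 2 + 2 * p * σ ^ 2 := by
    rw [hR]
    rw [Finset.sum_add_distrib, hS]
    simp [hvσ, Finset.card_univ]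
    ring
  rw [h1, hRsum, Finset.sum_add_distrib, Finset.sum_const, Finset.card_univ]
  simp only [Fintype.card_fin, nsmul_eq_mul]
  rw [← Finset.mul_sum, hS]  -- careful
  rw [hvσ]
  ring

end Norm4
end Aux

/-- A family of random vectors in `ℝ^p` such that all coordinates (across the whole family)
are mutually independent and each coordinate is Gaussian `N(0, σ²)`. -/
def IIDGaussianCoords {Ω : Type*} [MeasurableSpace Ω] (P : Measure Ω)
    {ι : Type*} {p : ℕ} (σ : ℝ) (ε : ι → Ω → EuclideanSpace ℝ (Fin p)) : Prop :=
  (∀ i, Measurable (ε i)) ∧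
  iIndepFun (fun q : ι × Fin p => fun ω => ε q.1 ω q.2) P ∧
  ∀ i k, Measure.map (fun ω => ε i ω k) P = gaussianReal 0 ⟨σ ^ 2, sq_nonneg σ⟩

theorem stmt_6 {Ω : Type*} [MeasurableSpace Ω] (P : Measure Ω) [IsProbabilityMeasure P]
    (p : ℕ) (hp : 1 ≤ p) (σ : ℝ) (hσ : 0 < σ)
    (ε : Fin 3 → Ω → EuclideanSpace ℝ (Fin p))
    (hiid : IIDGaussianCoords P σ ε)
    (cij cij' : EuclideanSpace ℝ (Fin p)) :
    ∫ ω, ‖cij + ε 0 ω - ε 1 ω‖ ^ 2 * ‖cij' + ε 0 ω - ε 2 ω‖ ^ 2 ∂P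
      ≤ 4 * σ ^ 4 * Real.sqrt
          (((p + (‖cij‖ / (Real.sqrt 2 * σ)) ^ 2) ^ 2
              + 2 * (p + 2 * (‖cij‖ / (Real.sqrt 2 * σ)) ^ 2))
            * ((p + (‖cij'‖ / (Real.sqrt 2 * σ)) ^ 2) ^ 2
              + 2 * (p + 2 * (‖cij'‖ / (Real.sqrt 2 * σ)) ^ 2))) := by
  obtain ⟨hmeas, hind, hdist⟩ := hiid
  -- abbreviations
  set A : Ω → ℝ := fun ω => ‖cij + ε 0 ω - ε 1 ω‖ ^ 2 with hA
  set B : Ω → ℝ := fun ω => ‖cij' + ε 0 ω - ε 2 ω‖ ^ 2 with hB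
  have h01 : (0 : Fin 3) ≠ 1 := by decide
  have h02 : (0 : Fin 3) ≠ 2 := by decide
  obtain ⟨hAint, hAval⟩ := my_norm4 hσ hmeas hind hdist h01 cij
  obtain ⟨hBint, hBval⟩ := my_norm4 hσ hmeas hind hdist h02 cij'
  set MA : ℝ := (‖cij‖ ^ 2 + 2 * p * σ ^ 2) ^ 2 + 8 * p * σ ^ 4 + 8 * σ ^ 2 * ‖cij‖ ^ 2 with hMA
  set MB : ℝ := (‖cij'‖ ^ 2 + 2 * p * σ ^ 2) ^ 2 + 8 * p * σ ^ 4 + 8 * σ ^ 2 * ‖cij'‖ ^ 2 with hMB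
  have hMApos : 0 ≤ MA := by positivity
  have hMBpos : 0 ≤ MB := by positivity
  -- measurability
  have hAm : Measurable A := by
    apply Measurable.pow_const
    exact (measurable_norm.comp (((measurable_const.add (hmeas 0)).sub (hmeas 1))))
  have hBm : Measurable B := by
    apply Measurable.pow_const
    exact (measurable_norm.comp (((measurable_const.add (hmeas 0)).sub (hmeas 2))))
  have hAnn : ∀ ω, 0 ≤ A ω := fun ω => by positivity
  have hBnn : ∀ ω, 0 ≤ B ω := fun ω => by positivity
  -- express LHS as toReal of a lintegral
  have hlhs : ∫ ω, A ω * B ω ∂P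
      = (∫⁻ ω, ENNReal.ofReal (A ω) * ENNReal.ofReal (B ω) ∂P).toReal := by
    rw [integral_eq_lintegral_of_nonneg_ae (ae_of_all _ fun ω => mul_nonneg (hAnn ω) (hBnn ω))
      ((hAm.mul hBm).aestronglyMeasurable)]
    congr 1
    apply lintegral_congr
    intro ω
    rw [ENNReal.ofReal_mul (hAnn ω)]
  -- Cauchy-Schwarz in lintegral form
  have hCS := ENNReal.lintegral_mul_le_Lp_mul_Lq P (Real.holderConjugate_iff_eq_conjExponent
      (by norm_num) |>.mpr (by norm_num) : Real.HolderConjugate 2 2)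
    (by fun_prop : AEMeasurable (fun ω => ENNReal.ofReal (A ω)) P)
    (by fun_prop : AEMeasurable (fun ω => ENNReal.ofReal (B ω)) P)
  -- compute the squares' lintegrals
  have hA4 : ∫⁻ ω, ENNReal.ofReal (A ω) ^ (2 : ℝ) ∂P = ENNReal.ofReal MA := by
    have e : ∀ ω, ENNReal.ofReal (A ω) ^ (2 : ℝ) = ENNReal.ofReal (‖cij + ε 0 ω - ε 1 ω‖ ^ 4) := by
      intro ω
      rw [ENNReal.ofReal_rpow_of_nonneg (hAnn ω) (by norm_num)]
      congr 1
      rw [show (2 : ℝ) = ((2 : ℕ) : ℝ) by norm_num, Real.rpow_natCast, hA]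
      ring
    rw [lintegral_congr e, ← ofReal_integral_eq_lintegral_ofReal hAint
      (ae_of_all _ fun ω => by positivity), hAval]
  have hB4 : ∫⁻ ω, ENNReal.ofReal (B ω) ^ (2 : ℝ) ∂P = ENNReal.ofReal MB := by
    have e : ∀ ω, ENNReal.ofReal (B ω) ^ (2 : ℝ) = ENNReal.ofReal (‖cij' + ε 0 ω - ε 2 ω‖ ^ 4) := by
      intro ω
      rw [ENNReal.ofReal_rpow_of_nonneg (hBnn ω) (by norm_num)]
      congr 1
      rw [show (2 : ℝ) = ((2 : ℕ) : ℝ) by norm_num, Real.rpow_natCast, hB]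
      ring
    rw [lintegral_congr e, ← ofReal_integral_eq_lintegral_ofReal hBint
      (ae_of_all _ fun ω => by positivity), hBval]
  rw [hA4, hB4] at hCS
  -- bound
  have hfin : ENNReal.ofReal MA ^ (1 / 2 : ℝ) * ENNReal.ofReal MB ^ (1 / 2 : ℝ) ≠ ⊤ := by
    apply ENNReal.mul_ne_top <;> exact ENNReal.rpow_ne_top_of_nonneg (by norm_num) ENNReal.ofReal_ne_top
  have hle : (∫⁻ ω, ENNReal.ofReal (A ω) * ENNReal.ofReal (B ω) ∂P).toReal
      ≤ Real.sqrt MA * Real.sqrt MB := by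
    have h := ENNReal.toReal_mono hfin (by exact hCS)
    refine h.trans_eq ?_
    rw [ENNReal.toReal_mul, ← ENNReal.toReal_rpow, ← ENNReal.toReal_rpow,
      ENNReal.toReal_ofReal hMApos, ENNReal.toReal_ofReal hMBpos,
      Real.sqrt_eq_rpow, Real.sqrt_eq_rpow]
  rw [hlhs]
  refine hle.trans ?_
  -- final algebra
  rw [← Real.sqrt_mul hMApos]
  set L : ℝ := (‖cij‖ / (Real.sqrt 2 * σ)) ^ 2 with hL
  set L' : ℝ := (‖cij'‖ / (Real.sqrt 2 * σ)) ^ 2 with hL'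
  have hLe : L = ‖cij‖ ^ 2 / (2 * σ ^ 2) := by
    rw [hL, div_pow, mul_pow, Real.sq_sqrt (by norm_num)]
  have hL'e : L' = ‖cij'‖ ^ 2 / (2 * σ ^ 2) := by
    rw [hL', div_pow, mul_pow, Real.sq_sqrt (by norm_num)]
  have hMAe : MA = 4 * σ ^ 4 * ((p + L) ^ 2 + 2 * (p + 2 * L)) := by
    rw [hMA, hLe]
    field_simp
    ring
  have hMBe : MB = 4 * σ ^ 4 * ((p + L') ^ 2 + 2 * (p + 2 * L')) := by
    rw [hMB, hL'e]
    field_simp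
    ring
  rw [hMAe, hMBe]
  have : 4 * σ ^ 4 * ((p + L) ^ 2 + 2 * (p + 2 * L)) * (4 * σ ^ 4 * ((p + L') ^ 2 + 2 * (p + 2 * L')))
      = (4 * σ ^ 4) ^ 2 * (((p + L) ^ 2 + 2 * (p + 2 * L)) * ((p + L') ^ 2 + 2 * (p + 2 * L'))) := by
    ring
  rw [this, Real.sqrt_mul (by positivity), Real.sqrt_sq (by positivity)]
end

section
/- Let ε_i, ε_j, ε_{j'} be three mutually independent random vectors in ℝ^p with i.i.d. N(0,σ²) coordinates, let c_{ij}, c_{ij'} ∈ ℝ^p be fixed vectors with c_{jj'} := c_{ij'} − c_{ij}, and set A_{ij} = ‖c_{ij} + ε_i − ε_j‖₂, A_{ij'} = ‖c_{ij'} + ε_i − ε_{j'}‖₂, and λ_{jj'} = ‖c_{jj'}‖₂/(√2 σ). Then Var(A_{ij} + A_{ij'}) ≥ 2σ²(p + λ_{jj'}²) − (E(A_{ij}) + E(A_{ij'}))². -/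
open MeasureTheory ProbabilityTheory Real Set
open scoped NNReal ENNReal

section GaussAux

lemma aux_split {g : ℝ → ℝ} (hg : Integrable g) :
    ∫ x, g x = (∫ x in Iic (0:ℝ), g x) + ∫ x in Ioi (0:ℝ), g x := by
  rw [← setIntegral_union (Iic_disjoint_Ioi le_rfl) measurableSet_Ioi
    hg.integrableOn hg.integrableOn, Iic_union_Ioi, Measure.restrict_univ]

lemma aux_odd {g : ℝ → ℝ} (hg : Integrable g) (ho : ∀ x, g (-x) = - g x) :
    ∫ x, g x = 0 := by
  have h1 : (∫ x in Iic (0:ℝ), g x) = ∫ x in Ioi (0:ℝ), g (-x) := by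
    rw [integral_comp_neg_Ioi, neg_zero]
  have h2 : (∫ x in Ioi (0:ℝ), g (-x)) = - ∫ x in Ioi (0:ℝ), g x := by
    simp_rw [ho]; exact integral_neg g
  rw [aux_split hg, h1, h2]; ring

lemma aux_sq_exp {b : ℝ} (hb : 0 < b) :
    ∫ x : ℝ, x ^ 2 * Real.exp (-b * x ^ 2) = Real.sqrt π / (2 * b * Real.sqrt b) := by
  have h := integral_rpow_mul_exp_neg_mul_rpow (p := 2) (q := 2) two_pos (by norm_num) hb
  rw [show ((2:ℝ) + 1)/2 = 1/2 + 1 by norm_num, Real.Gamma_add_one (by norm_num),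
    Real.Gamma_one_half_eq] at h
  have hIoi : (∫ x in Ioi (0:ℝ), x ^ 2 * Real.exp (-b * x ^ 2))
      = b ^ (-(2+1)/2 : ℝ) * (1/2) * (1/2 * Real.sqrt π) := by
    rw [← h]
    refine setIntegral_congr_fun measurableSet_Ioi (fun x hx => ?_)
    rw [← Real.rpow_natCast x 2]
    norm_num
  have heven : (fun x : ℝ => x ^ 2 * Real.exp (-b * x ^ 2))
      = fun x : ℝ => (fun t => t ^ 2 * Real.exp (-b * t ^ 2)) |x| := by
    funext x; simp [sq_abs]
  have h2 : ∫ x : ℝ, x ^ 2 * Real.exp (-b * x ^ 2)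
      = 2 * ∫ x in Ioi (0:ℝ), x ^ 2 * Real.exp (-b * x ^ 2) := by
    conv_lhs => rw [heven]
    exact integral_comp_abs (f := fun t => t ^ 2 * Real.exp (-b * t ^ 2))
  rw [h2, hIoi]
  have h3 : (b : ℝ) ^ (-(2+1)/2 : ℝ) = (b * Real.sqrt b)⁻¹ := by
    rw [show (-(2+1)/2 : ℝ) = -(1 + 1/2) by norm_num, Real.rpow_neg hb.le,
      Real.rpow_add hb, Real.rpow_one, ← Real.sqrt_eq_rpow]
  rw [h3]
  have hsb : Real.sqrt b ≠ 0 := by positivity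
  field_simp

lemma aux_pdf_eq (v : ℝ≥0) (x : ℝ) :
    gaussianPDFReal 0 v x
      = (Real.sqrt (2 * π * v))⁻¹ * Real.exp (-(2 * (v:ℝ))⁻¹ * x ^ 2) := by
  rw [gaussianPDFReal]
  congr 1
  rw [sub_zero, div_eq_mul_inv]
  ring_nf

lemma aux_integral_gaussian (g : ℝ → ℝ) {v : ℝ≥0} (hv : v ≠ 0) :
    ∫ x, g x ∂(gaussianReal 0 v) = ∫ x, gaussianPDFReal 0 v x * g x := by
  rw [gaussianReal_of_var_ne_zero 0 hv]
  have hpdf : gaussianPDF 0 v = fun x => ((gaussianPDFReal 0 v x).toNNReal : ℝ≥0∞) := rfl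
  rw [hpdf, integral_withDensity_eq_integral_smul
    ((measurable_gaussianPDFReal 0 v).real_toNNReal) g]
  congr 1
  funext x
  rw [NNReal.smul_def, smul_eq_mul, Real.coe_toNNReal _ (gaussianPDFReal_nonneg 0 v x)]

lemma aux_integrable_pdf_mul_sq {v : ℝ≥0} (hv : v ≠ 0) :
    Integrable (fun x => gaussianPDFReal 0 v x * x ^ 2) := by
  have hb : 0 < (2 * (v:ℝ))⁻¹ := by
    have : (0:ℝ) < v := by positivity
    positivity
  have h := (integrable_rpow_mul_exp_neg_mul_sq hb (s := 2) (by norm_num)).const_mul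
    (Real.sqrt (2 * π * v))⁻¹
  refine h.congr ?_
  filter_upwards with x
  rw [aux_pdf_eq]
  rw [← Real.rpow_natCast x 2]
  norm_num
  ring

lemma aux_integrable_pdf_mul_id {v : ℝ≥0} (hv : v ≠ 0) :
    Integrable (fun x => gaussianPDFReal 0 v x * x) := by
  have hvpos : (0:ℝ) < v := by positivity
  have hb : 0 < (2 * (v:ℝ))⁻¹ := by positivity
  have h := (integrable_mul_exp_neg_mul_sq hb).const_mul (Real.sqrt (2 * π * v))⁻¹
  refine h.congr ?_
  filter_upwards with x
  rw [aux_pdf_eq]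
  ring

lemma aux_moment_one {v : ℝ≥0} (hv : v ≠ 0) :
    ∫ x, x ∂(gaussianReal 0 v) = 0 := by
  rw [aux_integral_gaussian _ hv]
  refine aux_odd (aux_integrable_pdf_mul_id hv) (fun x => ?_)
  rw [aux_pdf_eq, aux_pdf_eq]
  ring_nf

lemma aux_moment_two {v : ℝ≥0} (hv : v ≠ 0) :
    ∫ x, x ^ 2 ∂(gaussianReal 0 v) = v := by
  have hvpos : (0:ℝ) < v := by positivity
  have hb : 0 < (2 * (v:ℝ))⁻¹ := by positivity
  rw [aux_integral_gaussian _ hv]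
  have : (fun x => gaussianPDFReal 0 v x * x ^ 2)
      = fun x => (Real.sqrt (2 * π * v))⁻¹ * (x ^ 2 * Real.exp (-(2 * (v:ℝ))⁻¹ * x ^ 2)) := by
    funext x; rw [aux_pdf_eq]; ring
  rw [this, integral_const_mul, aux_sq_exp hb]
  have h2v : (0:ℝ) ≤ 2 * v := by positivity
  rw [show (2 * π * (v:ℝ)) = (2 * v) * π by ring, Real.sqrt_mul h2v,
    Real.sqrt_inv (2 * (v:ℝ))]
  have hs2v : Real.sqrt (2 * (v:ℝ)) ≠ 0 := by positivity
  have hsp : Real.sqrt π ≠ 0 := by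
    have := Real.pi_pos; positivity
  have hsq : Real.sqrt (2 * (v:ℝ)) * Real.sqrt (2 * (v:ℝ)) = 2 * v :=
    Real.mul_self_sqrt h2v
  field_simp

lemma aux_integrable_sq_gaussian {v : ℝ≥0} (hv : v ≠ 0) :
    Integrable (fun x : ℝ => x ^ 2) (gaussianReal 0 v) := by
  rw [gaussianReal_of_var_ne_zero 0 hv,
    integrable_withDensity_iff (measurable_gaussianPDF 0 v)
      (Filter.Eventually.of_forall fun x => ENNReal.ofReal_lt_top)]
  refine (aux_integrable_pdf_mul_sq hv).congr ?_
  filter_upwards with x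
  rw [gaussianPDF, ENNReal.toReal_ofReal (gaussianPDFReal_nonneg 0 v x), mul_comm]

lemma aux_memLp {Ω : Type*} [MeasurableSpace Ω] (P : Measure Ω) {X : Ω → ℝ}
    (hm : Measurable X) {v : ℝ≥0} (hv : v ≠ 0)
    (hlaw : Measure.map X P = gaussianReal 0 v) : MemLp X 2 P := by
  have h : MemLp id 2 (gaussianReal 0 v) :=
    (memLp_two_iff_integrable_sq aestronglyMeasurable_id).2 (aux_integrable_sq_gaussian hv)
  rw [← hlaw] at h
  exact (memLp_map_measure_iff aestronglyMeasurable_id hm.aemeasurable).1 h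

lemma aux_mean {Ω : Type*} [MeasurableSpace Ω] (P : Measure Ω) {X : Ω → ℝ}
    (hm : Measurable X) {v : ℝ≥0} (hv : v ≠ 0)
    (hlaw : Measure.map X P = gaussianReal 0 v) : ∫ ω, X ω ∂P = 0 := by
  calc ∫ ω, X ω ∂P = ∫ y, y ∂(Measure.map X P) :=
        (integral_map hm.aemeasurable aestronglyMeasurable_id).symm
    _ = 0 := by rw [hlaw]; exact aux_moment_one hv

lemma aux_meansq {Ω : Type*} [MeasurableSpace Ω] (P : Measure Ω) {X : Ω → ℝ}
    (hm : Measurable X) {v : ℝ≥0} (hv : v ≠ 0)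
    (hlaw : Measure.map X P = gaussianReal 0 v) : ∫ ω, X ω ^ 2 ∂P = v := by
  calc ∫ ω, X ω ^ 2 ∂P = ∫ y, y ^ 2 ∂(Measure.map X P) :=
        (integral_map hm.aemeasurable
          ((measurable_id.pow_const 2).aestronglyMeasurable)).symm
    _ = v := by rw [hlaw]; exact aux_moment_two hv

lemma aux_int_mul {Ω : Type*} [MeasurableSpace Ω] {P : Measure Ω} {f g : Ω → ℝ}
    (hf : MemLp f 2 P) (hg : MemLp g 2 P) :
    Integrable (fun ω => f ω * g ω) P := by
  refine ((hf.integrable_sq.add hg.integrable_sq).const_mul (1/2)).mono'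
    (hf.aestronglyMeasurable.mul hg.aestronglyMeasurable) ?_
  filter_upwards with ω
  simp only [Pi.add_apply]
  rw [Real.norm_eq_abs, abs_mul]
  nlinarith [sq_nonneg (|f ω| - |g ω|), sq_abs (f ω), sq_abs (g ω),
    abs_nonneg (f ω), abs_nonneg (g ω)]

lemma aux_normsq {p : ℕ} (y : EuclideanSpace ℝ (Fin p)) : ‖y‖ ^ 2 = ∑ k, y k ^ 2 := by
  rw [EuclideanSpace.norm_eq]
  rw [Real.sq_sqrt (by positivity)]
  simp [Real.norm_eq_abs, sq_abs]

lemma aux_norm_le_sum {p : ℕ} (y : EuclideanSpace ℝ (Fin p)) : ‖y‖ ≤ ∑ k, |y k| := by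
  rw [EuclideanSpace.norm_eq]
  refine le_trans (Real.sqrt_le_sqrt ?_) (le_of_eq (Real.sqrt_sq (by positivity)))
  calc ∑ k, ‖y k‖ ^ 2 = ∑ k, |y k| ^ 2 := by simp [Real.norm_eq_abs]
    _ ≤ (∑ k, |y k|) ^ 2 := Finset.sum_sq_le_sq_sum_of_nonneg (fun i _ => abs_nonneg _)

end GaussAux

theorem stmt_7 {Ω : Type*} [MeasurableSpace Ω] (P : Measure Ω) [IsProbabilityMeasure P]
    (p : ℕ) (hp : 1 ≤ p) (σ : ℝ) (hσ : 0 < σ)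
    (ε : Fin 3 → Ω → EuclideanSpace ℝ (Fin p))
    (hiid : IIDGaussianCoords P σ ε)
    (cij cij' : EuclideanSpace ℝ (Fin p)) :
    (∫ ω, (‖cij + ε 0 ω - ε 1 ω‖ + ‖cij' + ε 0 ω - ε 2 ω‖) ^ 2 ∂P)
        - (∫ ω, (‖cij + ε 0 ω - ε 1 ω‖ + ‖cij' + ε 0 ω - ε 2 ω‖) ∂P) ^ 2
      ≥ 2 * σ ^ 2 * (p + (‖cij' - cij‖ / (Real.sqrt 2 * σ)) ^ 2)
        - ((∫ ω, ‖cij + ε 0 ω - ε 1 ω‖ ∂P) + ∫ ω, ‖cij' + ε 0 ω - ε 2 ω‖ ∂P) ^ 2 := by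
  obtain ⟨hmeas, hindep, hlaw⟩ := hiid
  have hv : (⟨σ ^ 2, sq_nonneg σ⟩ : ℝ≥0) ≠ 0 := by
    intro h
    have h' : ((⟨σ ^ 2, sq_nonneg σ⟩ : ℝ≥0) : ℝ) = 0 := by rw [h]; simp
    have : σ ^ 2 = 0 := h'
    nlinarith
  have hmX : ∀ (i : Fin 3) k, Measurable fun ω => ε i ω k :=
    fun i k => (measurable_pi_apply k).comp ((PiLp.continuous_ofLp 2 _).measurable.comp (hmeas i))
  have hL2 : ∀ (i : Fin 3) k, MemLp (fun ω => ε i ω k) 2 P :=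
    fun i k => aux_memLp P (hmX i k) hv (hlaw i k)
  have hE : ∀ (i : Fin 3) k, ∫ ω, ε i ω k ∂P = 0 :=
    fun i k => aux_mean P (hmX i k) hv (hlaw i k)
  have hE2 : ∀ (i : Fin 3) k, ∫ ω, (ε i ω k) ^ 2 ∂P = σ ^ 2 :=
    fun i k => aux_meansq P (hmX i k) hv (hlaw i k)
  -- measurability of the two norms
  have hmA : Measurable fun ω => ‖cij + ε 0 ω - ε 1 ω‖ :=
    ((measurable_const.add (hmeas 0)).sub (hmeas 1)).norm
  have hmB : Measurable fun ω => ‖cij' + ε 0 ω - ε 2 ω‖ :=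
    ((measurable_const.add (hmeas 0)).sub (hmeas 2)).norm
  -- an L² dominating function
  have hSL2 : MemLp (fun ω => ‖cij‖ + ‖cij'‖ + ∑ q : Fin 3 × Fin p, |ε q.1 ω q.2|) 2 P := by
    refine (memLp_const (‖cij‖ + ‖cij'‖)).add ?_
    exact memLp_finset_sum _ (fun q _ => (hL2 q.1 q.2).abs)
  have hSsum : ∀ ω, ∑ q : Fin 3 × Fin p, |ε q.1 ω q.2|
      = ∑ i : Fin 3, ∑ k, |ε i ω k| := fun ω => Fintype.sum_prod_type (f := fun q : Fin 3 × Fin p => |ε q.1 ω q.2|)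
  have hbound : ∀ (c0 : EuclideanSpace ℝ (Fin p)) (j : Fin 3) ω,
      ‖c0 + ε 0 ω - ε j ω‖ ≤ ‖c0‖ + (∑ k, |ε 0 ω k|) + ∑ k, |ε j ω k| := by
    intro c0 j ω
    calc ‖c0 + ε 0 ω - ε j ω‖ ≤ ‖c0 + ε 0 ω‖ + ‖ε j ω‖ := norm_sub_le _ _
      _ ≤ ‖c0‖ + ‖ε 0 ω‖ + ‖ε j ω‖ := by linarith [norm_add_le c0 (ε 0 ω)]
      _ ≤ _ := by linarith [aux_norm_le_sum (ε 0 ω), aux_norm_le_sum (ε j ω)]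
  have habs : ∀ (c0 : EuclideanSpace ℝ (Fin p)) (j : Fin 3),
      Measurable (fun ω => ‖c0 + ε 0 ω - ε j ω‖) →
      (‖c0‖ ≤ ‖cij‖ + ‖cij'‖) →
      (∀ ω, (∑ k, |ε j ω k|) ≤ (∑ k, |ε 1 ω k|) + ∑ k, |ε 2 ω k|) →
      MemLp (fun ω => ‖c0 + ε 0 ω - ε j ω‖) 2 P := by
    intro c0 j hm hc0 hj
    refine hSL2.of_le hm.aestronglyMeasurable ?_
    filter_upwards with ω
    rw [Real.norm_eq_abs, Real.norm_eq_abs, abs_of_nonneg (norm_nonneg _)]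
    refine le_trans ?_ (le_abs_self _)
    rw [hSsum ω, Fin.sum_univ_three]
    have hb := hbound c0 j ω
    have hj' := hj ω
    linarith
  have hsum_nonneg : ∀ (i : Fin 3) ω, (0:ℝ) ≤ ∑ k, |ε i ω k| :=
    fun i ω => Finset.sum_nonneg fun k _ => abs_nonneg _
  have hA2 : MemLp (fun ω => ‖cij + ε 0 ω - ε 1 ω‖) 2 P :=
    habs cij 1 hmA (by linarith [norm_nonneg cij']) (fun ω => by linarith [hsum_nonneg 2 ω])
  have hB2 : MemLp (fun ω => ‖cij' + ε 0 ω - ε 2 ω‖) 2 P :=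
    habs cij' 2 hmB (by linarith [norm_nonneg cij]) (fun ω => by linarith [hsum_nonneg 1 ω])
  have hintA : Integrable (fun ω => ‖cij + ε 0 ω - ε 1 ω‖) P := hA2.integrable one_le_two
  have hintB : Integrable (fun ω => ‖cij' + ε 0 ω - ε 2 ω‖) P := hB2.integrable one_le_two
  have hEq : ∫ ω, (‖cij + ε 0 ω - ε 1 ω‖ + ‖cij' + ε 0 ω - ε 2 ω‖) ∂P
      = (∫ ω, ‖cij + ε 0 ω - ε 1 ω‖ ∂P) + ∫ ω, ‖cij' + ε 0 ω - ε 2 ω‖ ∂P :=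
    integral_add hintA hintB
  have hintABsq : Integrable
      (fun ω => (‖cij + ε 0 ω - ε 1 ω‖ + ‖cij' + ε 0 ω - ε 2 ω‖) ^ 2) P :=
    (hA2.add hB2).integrable_sq
  -- product of coordinates of independent vectors
  have hprod : ∀ k : Fin p, ∫ ω, ε 1 ω k * ε 2 ω k ∂P = 0 := by
    intro k
    have hind : IndepFun (fun ω => ε 1 ω k) (fun ω => ε 2 ω k) P :=
      hindep.indepFun (show ((1 : Fin 3), k) ≠ ((2 : Fin 3), k) by simp)
    have h := IndepFun.integral_mul_eq_mul_integral hind (hmX 1 k).aestronglyMeasurable (hmX 2 k).aestronglyMeasurable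
    calc ∫ ω, ε 1 ω k * ε 2 ω k ∂P
        = ∫ ω, ((fun ω => ε 1 ω k) * fun ω => ε 2 ω k) ω ∂P := rfl
      _ = 0 := by rw [h, hE 1 k, hE 2 k, mul_zero]
  have hDint : ∀ k : Fin p, Integrable (fun ω => ε 1 ω k * ε 2 ω k) P :=
    fun k => aux_int_mul (hL2 1 k) (hL2 2 k)
  -- per-coordinate second moment of shifted difference
  have hcoord : ∀ k : Fin p,
      ∫ ω, ((cij' k - cij k) + (ε 1 ω k - ε 2 ω k)) ^ 2 ∂P
        = (cij' k - cij k) ^ 2 + 2 * σ ^ 2 := by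
    intro k
    set c : ℝ := cij' k - cij k with hc
    have i1 : Integrable (fun _ : Ω => c ^ 2) P := integrable_const _
    have i2a : Integrable (fun ω => (2 * c) * ε 1 ω k) P :=
      ((hL2 1 k).integrable one_le_two).const_mul _
    have i2b : Integrable (fun ω => (-(2 * c)) * ε 2 ω k) P :=
      ((hL2 2 k).integrable one_le_two).const_mul _
    have i2 : Integrable (fun ω => (2 * c) * ε 1 ω k + (-(2 * c)) * ε 2 ω k) P := i2a.add i2b
    have i12 : Integrable
        (fun ω => c ^ 2 + ((2 * c) * ε 1 ω k + (-(2 * c)) * ε 2 ω k)) P := i1.add i2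
    have i3a : Integrable (fun ω => (ε 1 ω k) ^ 2) P := (hL2 1 k).integrable_sq
    have i3b : Integrable (fun ω => (-2 : ℝ) * (ε 1 ω k * ε 2 ω k)) P :=
      (hDint k).const_mul _
    have i3c : Integrable (fun ω => (ε 2 ω k) ^ 2) P := (hL2 2 k).integrable_sq
    have i3ab : Integrable (fun ω => (ε 1 ω k) ^ 2 + (-2 : ℝ) * (ε 1 ω k * ε 2 ω k)) P :=
      i3a.add i3b
    have i3 : Integrable
        (fun ω => ((ε 1 ω k) ^ 2 + (-2 : ℝ) * (ε 1 ω k * ε 2 ω k)) + (ε 2 ω k) ^ 2) P :=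
      i3ab.add i3c
    have hexp : (fun ω => ((c : ℝ) + (ε 1 ω k - ε 2 ω k)) ^ 2)
        = fun ω => (c ^ 2 + ((2 * c) * ε 1 ω k + (-(2 * c)) * ε 2 ω k))
            + (((ε 1 ω k) ^ 2 + (-2 : ℝ) * (ε 1 ω k * ε 2 ω k)) + (ε 2 ω k) ^ 2) := by
      funext ω; ring
    rw [hexp, integral_add i12 i3, integral_add i1 i2, integral_add i2a i2b,
      integral_add i3ab i3c, integral_add i3a i3b,
      integral_const_mul, integral_const_mul, integral_const_mul,
      hE 1 k, hE 2 k, hE2 1 k, hE2 2 k, hprod k]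
    simp [measure_univ]
    ring
  -- the lower-bound function and its integral
  have hFcoord : ∀ ω, ‖cij' - cij + ε 1 ω - ε 2 ω‖ ^ 2
      = ∑ k, ((cij' k - cij k) + (ε 1 ω k - ε 2 ω k)) ^ 2 := by
    intro ω
    rw [aux_normsq]
    refine Finset.sum_congr rfl fun k _ => ?_
    have hk : (cij' - cij + ε 1 ω - ε 2 ω) k
        = (cij' k - cij k) + (ε 1 ω k - ε 2 ω k) := by
      simp [PiLp.sub_apply, PiLp.add_apply]
      ring
    rw [hk]
  have hintcoord : ∀ k : Fin p,
      Integrable (fun ω => ((cij' k - cij k) + (ε 1 ω k - ε 2 ω k)) ^ 2) P :=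
    fun k => ((memLp_const (cij' k - cij k)).add ((hL2 1 k).sub (hL2 2 k))).integrable_sq
  have hnormsq : ‖cij' - cij‖ ^ 2 = ∑ k, (cij' k - cij k) ^ 2 := by
    rw [aux_normsq]
    refine Finset.sum_congr rfl fun k _ => ?_
    rw [PiLp.sub_apply]
  have hFint : ∫ ω, ‖cij' - cij + ε 1 ω - ε 2 ω‖ ^ 2 ∂P
      = ‖cij' - cij‖ ^ 2 + 2 * (p:ℝ) * σ ^ 2 := by
    calc ∫ ω, ‖cij' - cij + ε 1 ω - ε 2 ω‖ ^ 2 ∂P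
        = ∫ ω, ∑ k, ((cij' k - cij k) + (ε 1 ω k - ε 2 ω k)) ^ 2 ∂P := by
          congr 1; funext ω; exact hFcoord ω
      _ = ∑ k, ∫ ω, ((cij' k - cij k) + (ε 1 ω k - ε 2 ω k)) ^ 2 ∂P :=
          integral_finset_sum _ (fun k _ => hintcoord k)
      _ = ∑ k : Fin p, ((cij' k - cij k) ^ 2 + 2 * σ ^ 2) :=
          Finset.sum_congr rfl fun k _ => hcoord k
      _ = (∑ k, (cij' k - cij k) ^ 2) + (p:ℝ) * (2 * σ ^ 2) := by
          rw [Finset.sum_add_distrib, Finset.sum_const, Finset.card_univ,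
            Fintype.card_fin, nsmul_eq_mul]
      _ = ‖cij' - cij‖ ^ 2 + 2 * (p:ℝ) * σ ^ 2 := by rw [hnormsq]; ring
  have hFintg : Integrable (fun ω => ‖cij' - cij + ε 1 ω - ε 2 ω‖ ^ 2) P := by
    refine (integrable_finset_sum _ (fun k (_ : k ∈ Finset.univ) => hintcoord k)).congr ?_
    filter_upwards with ω
    exact (hFcoord ω).symm
  have hptwise : ∀ ω, ‖cij' - cij + ε 1 ω - ε 2 ω‖ ^ 2
      ≤ (‖cij + ε 0 ω - ε 1 ω‖ + ‖cij' + ε 0 ω - ε 2 ω‖) ^ 2 := by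
    intro ω
    have heqv : (cij' + ε 0 ω - ε 2 ω) - (cij + ε 0 ω - ε 1 ω)
        = cij' - cij + ε 1 ω - ε 2 ω := by abel
    have h1 : ‖cij' - cij + ε 1 ω - ε 2 ω‖
        ≤ ‖cij + ε 0 ω - ε 1 ω‖ + ‖cij' + ε 0 ω - ε 2 ω‖ := by
      rw [← heqv]
      refine (norm_sub_le _ _).trans (le_of_eq (add_comm _ _))
    exact pow_le_pow_left₀ (norm_nonneg _) h1 2
  have hkey : ‖cij' - cij‖ ^ 2 + 2 * (p:ℝ) * σ ^ 2
      ≤ ∫ ω, (‖cij + ε 0 ω - ε 1 ω‖ + ‖cij' + ε 0 ω - ε 2 ω‖) ^ 2 ∂P := by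
    rw [← hFint]
    exact integral_mono hFintg hintABsq hptwise
  have hRHS : 2 * σ ^ 2 * ((p:ℝ) + (‖cij' - cij‖ / (Real.sqrt 2 * σ)) ^ 2)
      = ‖cij' - cij‖ ^ 2 + 2 * (p:ℝ) * σ ^ 2 := by
    have h2 : Real.sqrt 2 ^ 2 = 2 := Real.sq_sqrt (by norm_num)
    have hσ' : σ ≠ 0 := ne_of_gt hσ
    rw [div_pow, mul_pow, h2]
    field_simp
    ring
  rw [hEq, hRHS]
  linarith [hkey]
end

section
/- Let ε_i, ε_j, ε_{j'} be three mutually independent random vectors in ℝ^p with i.i.d. N(0,σ²) coordinates, let c_{ij}, c_{ij'} ∈ ℝ^p be fixed vectors with c_{jj'} := c_{ij'} − c_{ij}, and set A_{ij} = ‖c_{ij} + ε_i − ε_j‖₂, A_{ij'} = ‖c_{ij'} + ε_i − ε_{j'}‖₂, λ_{ij} = ‖c_{ij}‖₂/(√2 σ), λ_{ij'} = ‖c_{ij'}‖₂/(√2 σ), λ_{jj'} = ‖c_{jj'}‖₂/(√2 σ). Then E(A_{ij} A_{ij'}) ≥ −σ²(p + λ_{ij}² + λ_{ij'}² − λ_{jj'}²).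 -/
open MeasureTheory ProbabilityTheory Real Filter
open scoped NNReal ENNReal

namespace Stmt9Aux

lemma integral_sq_mul_exp_neg_mul_sq {b : ℝ} (hb : 0 < b) :
    ∫ x : ℝ, x ^ 2 * Real.exp (-b * x ^ 2) = (2 * b)⁻¹ * Real.sqrt (π / b) := by
  have hint2 : Integrable (fun x : ℝ => x ^ 2 * Real.exp (-b * x ^ 2)) := by
    have := integrable_rpow_mul_exp_neg_mul_sq hb (s := 2) (by norm_num)
    simpa [Real.rpow_natCast] using this
  have hint0 : Integrable (fun x : ℝ => Real.exp (-b * x ^ 2)) :=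
    integrable_exp_neg_mul_sq hb
  set F : ℝ → ℝ := fun x => -(2 * b)⁻¹ * x * Real.exp (-b * x ^ 2) with hF
  have hderiv : ∀ x : ℝ, HasDerivAt F
      (x ^ 2 * Real.exp (-b * x ^ 2) - (2 * b)⁻¹ * Real.exp (-b * x ^ 2)) x := by
    intro x
    have h1 : HasDerivAt (fun x : ℝ => -b * x ^ 2) (-b * (2 * x)) x := by
      simpa using ((hasDerivAt_pow 2 x).const_mul (-b))
    have h2 : HasDerivAt (fun x : ℝ => Real.exp (-b * x ^ 2))
        (Real.exp (-b * x ^ 2) * (-b * (2 * x))) x := h1.exp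
    have h3 := ((hasDerivAt_id x).mul h2).const_mul (-(2 * b)⁻¹)
    have h3' : HasDerivAt F
        (-(2 * b)⁻¹ * (1 * Real.exp (-b * x ^ 2)
          + x * (Real.exp (-b * x ^ 2) * (-b * (2 * x))))) x := by
      simpa only [hF, id, Pi.mul_apply, mul_assoc] using h3
    convert h3' using 1
    have hb' : b ≠ 0 := ne_of_gt hb
    field_simp
    ring
  have htop : Tendsto F atTop (nhds 0) := by
    have h := rpow_mul_exp_neg_mul_sq_isLittleO_exp_neg hb 1
    have hexp : Tendsto (fun x : ℝ => Real.exp (-(1/2) * x)) atTop (nhds 0) := by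
      refine Real.tendsto_exp_atBot.comp ?_
      exact Tendsto.const_mul_atTop_of_neg (by norm_num : -(1/2:ℝ) < 0) tendsto_id
    have h2 : Tendsto (fun x : ℝ => x ^ (1:ℝ) * Real.exp (-b * x ^ 2)) atTop (nhds 0) :=
      h.trans_tendsto hexp
    have h3 : Tendsto (fun x : ℝ => -(2 * b)⁻¹ * (x ^ (1:ℝ) * Real.exp (-b * x ^ 2)))
        atTop (nhds (-(2 * b)⁻¹ * 0)) := h2.const_mul _
    rw [mul_zero] at h3
    refine h3.congr' ?_
    filter_upwards [eventually_gt_atTop (0:ℝ)] with x hx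
    rw [Real.rpow_one]
    simp [hF, mul_assoc]
  have hbot : Tendsto F atBot (nhds 0) := by
    have := (htop.neg).comp tendsto_neg_atBot_atTop
    simp only [Function.comp_def, neg_zero] at this
    refine this.congr fun x => ?_
    simp [hF]
  have hint' : Integrable (fun x : ℝ =>
      x ^ 2 * Real.exp (-b * x ^ 2) - (2 * b)⁻¹ * Real.exp (-b * x ^ 2)) :=
    hint2.sub (hint0.const_mul _)
  have key := integral_of_hasDerivAt_of_tendsto hderiv hint' hbot htop
  rw [sub_zero] at key
  rw [integral_sub hint2 (hint0.const_mul _), MeasureTheory.integral_const_mul,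
    integral_gaussian] at key
  linarith

lemma integral_odd_zero (f : ℝ → ℝ) (hodd : ∀ x, f (-x) = - f x) :
    ∫ x : ℝ, f x = 0 := by
  have h1 : ∫ x : ℝ, f (-x) = ∫ x : ℝ, f x := by
    conv_rhs => rw [← Measure.map_neg_eq_self (volume : Measure ℝ)]
    exact ((Homeomorph.neg ℝ).measurableEmbedding.integral_map f).symm
  simp_rw [hodd, integral_neg] at h1
  linarith

lemma gaussianReal_pdf_smul {v : ℝ≥0} (hv : v ≠ 0) (g : ℝ → ℝ) :
    ∫ x, g x ∂(gaussianReal 0 v) = ∫ x, gaussianPDFReal 0 v x * g x := by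
  rw [gaussianReal_of_var_ne_zero 0 hv]
  rw [show gaussianPDF 0 v
      = fun x => ((gaussianPDFReal 0 v x).toNNReal : ℝ≥0∞) from rfl,
    integral_withDensity_eq_integral_smul
      ((measurable_gaussianPDFReal 0 v).real_toNNReal) g]
  congr 1 with x
  simp [NNReal.smul_def, Real.coe_toNNReal _ (gaussianPDFReal_nonneg 0 v x)]

lemma gaussianReal_integrable_pdf_smul {v : ℝ≥0} (hv : v ≠ 0) (g : ℝ → ℝ)
    (h : Integrable (fun x => gaussianPDFReal 0 v x * g x)) :
    Integrable g (gaussianReal 0 v) := by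
  rw [gaussianReal_of_var_ne_zero 0 hv]
  rw [show gaussianPDF 0 v
      = fun x => ((gaussianPDFReal 0 v x).toNNReal : ℝ≥0∞) from rfl,
    integrable_withDensity_iff_integrable_smul
      ((measurable_gaussianPDFReal 0 v).real_toNNReal)]
  refine h.congr (Eventually.of_forall fun x => ?_)
  simp [NNReal.smul_def, Real.coe_toNNReal _ (gaussianPDFReal_nonneg 0 v x)]

lemma gaussianPDFReal_zero_eq {v : ℝ≥0} (x : ℝ) :
    gaussianPDFReal 0 v x = (Real.sqrt (2 * π * v))⁻¹ * Real.exp (-(2 * (v:ℝ))⁻¹ * x ^ 2) := by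
  rw [gaussianPDFReal]
  congr 1
  rw [sub_zero]
  congr 1
  by_cases h : (v:ℝ) = 0
  · simp [h]
  · field_simp

section
variable {v : ℝ≥0} (hv : v ≠ 0)
include hv

lemma vpos : (0:ℝ) < v := NNReal.coe_pos.mpr (pos_iff_ne_zero.mpr hv)

lemma bpos : 0 < (2 * (v:ℝ))⁻¹ := by have := vpos hv; positivity

lemma gaussian_integrable_id : Integrable (fun x : ℝ => x) (gaussianReal 0 v) := by
  have h := (integrable_mul_exp_neg_mul_sq (bpos hv)).const_mul (Real.sqrt (2 * π * v))⁻¹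
  refine gaussianReal_integrable_pdf_smul hv _ (h.congr (Eventually.of_forall fun x => ?_))
  simp only [gaussianPDFReal_zero_eq]
  ring

lemma gaussian_integrable_sq : Integrable (fun x : ℝ => x ^ 2) (gaussianReal 0 v) := by
  have h0 : Integrable (fun x : ℝ => x ^ 2 * Real.exp (-(2 * (v:ℝ))⁻¹ * x ^ 2)) := by
    have := integrable_rpow_mul_exp_neg_mul_sq (bpos hv) (s := 2) (by norm_num)
    simpa [Real.rpow_natCast] using this
  have h := h0.const_mul (Real.sqrt (2 * π * v))⁻¹
  refine gaussianReal_integrable_pdf_smul hv _ (h.congr (Eventually.of_forall fun x => ?_))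
  simp only [gaussianPDFReal_zero_eq]
  ring

lemma gaussian_integral_id : ∫ x, x ∂(gaussianReal 0 v) = 0 := by
  rw [gaussianReal_pdf_smul hv]
  refine integral_odd_zero _ fun x => ?_
  simp only [gaussianPDFReal_zero_eq, neg_sq]
  ring

lemma gaussian_integral_sq : ∫ x, x ^ 2 ∂(gaussianReal 0 v) = v := by
  rw [gaussianReal_pdf_smul hv]
  have hb := bpos hv
  have hv' := vpos hv
  rw [show (fun x : ℝ => gaussianPDFReal 0 v x * x ^ 2)
      = fun x : ℝ => (Real.sqrt (2 * π * v))⁻¹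
        * (x ^ 2 * Real.exp (-(2 * (v:ℝ))⁻¹ * x ^ 2)) from
    funext fun x => by simp only [gaussianPDFReal_zero_eq]; ring]
  rw [MeasureTheory.integral_const_mul, integral_sq_mul_exp_neg_mul_sq hb]
  rw [show π / (2 * (v:ℝ))⁻¹ = 2 * π * v by field_simp]
  rw [show (2 * (2 * (v:ℝ))⁻¹)⁻¹ = v by field_simp]
  have hs : Real.sqrt (2 * π * v) ≠ 0 := by positivity
  field_simp [mul_comm]

end

end Stmt9Aux

theorem stmt_9 {Ω : Type*} [MeasurableSpace Ω] (P : Measure Ω) [IsProbabilityMeasure P]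
    (p : ℕ) (hp : 1 ≤ p) (σ : ℝ) (hσ : 0 < σ)
    (ε : Fin 3 → Ω → EuclideanSpace ℝ (Fin p))
    (hiid : IIDGaussianCoords P σ ε)
    (cij cij' : EuclideanSpace ℝ (Fin p)) :
    ∫ ω, ‖cij + ε 0 ω - ε 1 ω‖ * ‖cij' + ε 0 ω - ε 2 ω‖ ∂P
      ≥ -(σ ^ 2) * (p + (‖cij‖ / (Real.sqrt 2 * σ)) ^ 2
            + (‖cij'‖ / (Real.sqrt 2 * σ)) ^ 2 - (‖cij' - cij‖ / (Real.sqrt 2 * σ)) ^ 2) := by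
  classical
  obtain ⟨hm, hind, hlaw⟩ := hiid
  set v : ℝ≥0 := ⟨σ ^ 2, sq_nonneg σ⟩ with hv_def
  have hvcoe : (v : ℝ) = σ ^ 2 := rfl
  have hv : v ≠ 0 := by
    intro h
    have : (v : ℝ) = 0 := by rw [h]; simp
    rw [hvcoe] at this
    nlinarith
  have hmeas : ∀ i k, Measurable fun ω => ε i ω k :=
    fun i k => (measurable_pi_apply k).comp ((WithLp.measurable_ofLp 2 _).comp (hm i))
  -- integrability and moments of the coordinates
  have Iid : ∀ i k, Integrable (fun ω => ε i ω k) P := by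
    intro i k
    have h := (integrable_map_measure (μ := P) (f := fun ω => ε i ω k)
      (g := fun x : ℝ => x) measurable_id.aestronglyMeasurable (hmeas i k).aemeasurable)
    rw [hlaw i k] at h
    exact h.mp (Stmt9Aux.gaussian_integrable_id hv)
  have Isq : ∀ i k, Integrable (fun ω => (ε i ω k) ^ 2) P := by
    intro i k
    have h := (integrable_map_measure (μ := P) (f := fun ω => ε i ω k)
      (g := fun x : ℝ => x ^ 2) (measurable_id.pow_const 2).aestronglyMeasurable
      (hmeas i k).aemeasurable)
    rw [hlaw i k] at h
    exact h.mp (Stmt9Aux.gaussian_integrable_sq hv)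
  have Eid : ∀ i k, ∫ ω, ε i ω k ∂P = 0 := by
    intro i k
    have h := integral_map (μ := P) (φ := fun ω => ε i ω k) (f := fun x : ℝ => x)
      (hmeas i k).aemeasurable measurable_id.aestronglyMeasurable
    rw [hlaw i k] at h
    rw [← h, Stmt9Aux.gaussian_integral_id hv]
  have Esq : ∀ i k, ∫ ω, (ε i ω k) ^ 2 ∂P = σ ^ 2 := by
    intro i k
    have h := integral_map (μ := P) (φ := fun ω => ε i ω k) (f := fun x : ℝ => x ^ 2)
      (hmeas i k).aemeasurable (measurable_id.pow_const 2).aestronglyMeasurable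
    rw [hlaw i k] at h
    rw [← h, Stmt9Aux.gaussian_integral_sq hv, hvcoe]
  have hindep : ∀ i j (k : Fin p), i ≠ j →
      IndepFun (fun ω => ε i ω k) (fun ω => ε j ω k) P := by
    intro i j k hij
    exact hind.indepFun (show ((i, k) : Fin 3 × Fin p) ≠ (j, k) by
      simp [Prod.ext_iff, hij])
  have Imul : ∀ i j (k : Fin p), i ≠ j →
      Integrable (fun ω => ε i ω k * ε j ω k) P :=
    fun i j k hij => (hindep i j k hij).integrable_mul (Iid i k) (Iid j k)
  have Emul : ∀ i j (k : Fin p), i ≠ j → ∫ ω, ε i ω k * ε j ω k ∂P = 0 := by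
    intro i j k hij
    have h := (hindep i j k hij).integral_mul_eq_mul_integral (Iid i k).aestronglyMeasurable (Iid j k).aestronglyMeasurable
    rw [Eid i k, Eid j k, mul_zero] at h
    exact h
  -- coordinatewise second moment
  have coordKey : ∀ (a b : Fin 3) (t : ℝ) (k : Fin p), a ≠ b →
      Integrable (fun ω => (t + ε a ω k - ε b ω k) ^ 2) P ∧
      ∫ ω, (t + ε a ω k - ε b ω k) ^ 2 ∂P = t ^ 2 + 2 * σ ^ 2 := by
    intro a b t k hab
    have g1 : Integrable (fun ω => t ^ 2 + (ε a ω k) ^ 2) P :=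
      (integrable_const _).add (Isq a k)
    have g2 : Integrable (fun ω => t ^ 2 + (ε a ω k) ^ 2 + (ε b ω k) ^ 2) P :=
      g1.add (Isq b k)
    have g3 : Integrable (fun ω => t ^ 2 + (ε a ω k) ^ 2 + (ε b ω k) ^ 2
        + 2 * t * ε a ω k) P := g2.add ((Iid a k).const_mul (2 * t))
    have g4 : Integrable (fun ω => t ^ 2 + (ε a ω k) ^ 2 + (ε b ω k) ^ 2
        + 2 * t * ε a ω k - 2 * t * ε b ω k) P := g3.sub ((Iid b k).const_mul (2 * t))
    have g5 : Integrable (fun ω => t ^ 2 + (ε a ω k) ^ 2 + (ε b ω k) ^ 2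
        + 2 * t * ε a ω k - 2 * t * ε b ω k - 2 * (ε a ω k * ε b ω k)) P :=
      g4.sub ((Imul a b k hab).const_mul 2)
    have heq : (fun ω => (t + ε a ω k - ε b ω k) ^ 2)
        = fun ω => t ^ 2 + (ε a ω k) ^ 2 + (ε b ω k) ^ 2
          + 2 * t * ε a ω k - 2 * t * ε b ω k - 2 * (ε a ω k * ε b ω k) := by
      funext ω; ring
    constructor
    · rw [heq]; exact g5
    · rw [heq, integral_sub g4 ((Imul a b k hab).const_mul 2),
        integral_sub g3 ((Iid b k).const_mul (2 * t)),
        integral_add g2 ((Iid a k).const_mul (2 * t)),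
        integral_add g1 (Isq b k),
        integral_add (integrable_const _) (Isq a k),
        MeasureTheory.integral_const_mul, MeasureTheory.integral_const_mul,
        MeasureTheory.integral_const_mul,
        integral_const, Esq a k, Esq b k, Eid a k, Eid b k, Emul a b k hab]
      simp
      ring
  -- norms squared
  have normsq : ∀ (a b : Fin 3) (c : EuclideanSpace ℝ (Fin p)) (ω : Ω),
      ‖c + ε a ω - ε b ω‖ ^ 2 = ∑ k, (c k + ε a ω k - ε b ω k) ^ 2 := by
    intro a b c ω
    rw [EuclideanSpace.norm_eq, Real.sq_sqrt (Finset.sum_nonneg fun k _ => sq_nonneg _)]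
    refine Finset.sum_congr rfl fun k _ => ?_
    simp [sq_abs]
  have cnormsq : ∀ c : EuclideanSpace ℝ (Fin p), ‖c‖ ^ 2 = ∑ k, (c k) ^ 2 := by
    intro c
    rw [EuclideanSpace.norm_eq, Real.sq_sqrt (Finset.sum_nonneg fun k _ => sq_nonneg _)]
    exact Finset.sum_congr rfl fun k _ => by rw [Real.norm_eq_abs, sq_abs]
  have IN : ∀ (a b : Fin 3) (c : EuclideanSpace ℝ (Fin p)), a ≠ b →
      Integrable (fun ω => ‖c + ε a ω - ε b ω‖ ^ 2) P := by
    intro a b c hab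
    have h : Integrable (fun ω => ∑ k, (c k + ε a ω k - ε b ω k) ^ 2) P :=
      integrable_finset_sum _ fun k _ => (coordKey a b (c k) k hab).1
    exact h.congr (Eventually.of_forall fun ω => (normsq a b c ω).symm)
  have EN : ∀ (a b : Fin 3) (c : EuclideanSpace ℝ (Fin p)), a ≠ b →
      ∫ ω, ‖c + ε a ω - ε b ω‖ ^ 2 ∂P = ‖c‖ ^ 2 + 2 * p * σ ^ 2 := by
    intro a b c hab
    rw [integral_congr_ae (Eventually.of_forall (normsq a b c)),
      integral_finset_sum _ fun k _ => (coordKey a b (c k) k hab).1]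
    have : ∀ k ∈ Finset.univ, ∫ ω, (c k + ε a ω k - ε b ω k) ^ 2 ∂P
        = (c k) ^ 2 + 2 * σ ^ 2 := fun k _ => (coordKey a b (c k) k hab).2
    rw [Finset.sum_congr rfl this, Finset.sum_add_distrib, Finset.sum_const,
      Finset.card_univ, Fintype.card_fin, ← cnormsq c, nsmul_eq_mul]
    ring
  -- the three functions
  set f1 : Ω → ℝ := fun ω => ‖cij + ε 0 ω - ε 1 ω‖ with hf1
  set f2 : Ω → ℝ := fun ω => ‖cij' + ε 0 ω - ε 2 ω‖ with hf2
  set f3 : Ω → ℝ := fun ω => ‖(cij' - cij) + ε 1 ω - ε 2 ω‖ with hf3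
  have h01 : (0 : Fin 3) ≠ 1 := by decide
  have h02 : (0 : Fin 3) ≠ 2 := by decide
  have h12 : (1 : Fin 3) ≠ 2 := by decide
  have h3le : ∀ ω, f3 ω ≤ f1 ω + f2 ω := by
    intro ω
    have hvec : (cij' - cij) + ε 1 ω - ε 2 ω
        = (cij' + ε 0 ω - ε 2 ω) - (cij + ε 0 ω - ε 1 ω) := by abel
    rw [hf1, hf2, hf3]
    simp only
    rw [hvec, add_comm ‖cij + ε 0 ω - ε 1 ω‖ ‖cij' + ε 0 ω - ε 2 ω‖]
    exact norm_sub_le _ _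
  have hlow : ∀ ω, (f3 ω ^ 2 - f1 ω ^ 2 - f2 ω ^ 2) / 2 ≤ f1 ω * f2 ω := by
    intro ω
    have h0 : (0:ℝ) ≤ f3 ω := norm_nonneg _
    nlinarith [h3le ω]
  have I1 : Integrable (fun ω => f1 ω ^ 2) P := IN 0 1 cij h01
  have I2 : Integrable (fun ω => f2 ω ^ 2) P := IN 0 2 cij' h02
  have I3 : Integrable (fun ω => f3 ω ^ 2) P := IN 1 2 (cij' - cij) h12
  have E1 : ∫ ω, f1 ω ^ 2 ∂P = ‖cij‖ ^ 2 + 2 * p * σ ^ 2 := EN 0 1 cij h01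
  have E2 : ∫ ω, f2 ω ^ 2 ∂P = ‖cij'‖ ^ 2 + 2 * p * σ ^ 2 := EN 0 2 cij' h02
  have E3 : ∫ ω, f3 ω ^ 2 ∂P = ‖cij' - cij‖ ^ 2 + 2 * p * σ ^ 2 := EN 1 2 (cij' - cij) h12
  have Ia : Integrable (fun ω => f3 ω ^ 2 - f1 ω ^ 2) P := I3.sub I1
  have Ib : Integrable (fun ω => f3 ω ^ 2 - f1 ω ^ 2 - f2 ω ^ 2) P := Ia.sub I2
  have Ilow : Integrable (fun ω => (f3 ω ^ 2 - f1 ω ^ 2 - f2 ω ^ 2) / 2) P :=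
    Ib.div_const 2
  have Ibound : Integrable (fun ω => (f1 ω ^ 2 + f2 ω ^ 2) / 2) P :=
    (I1.add I2).div_const 2
  have Iprod : Integrable (fun ω => f1 ω * f2 ω) P := by
    have hmeasf : AEStronglyMeasurable (fun ω => f1 ω * f2 ω) P := by
      refine (Measurable.mul ?_ ?_).aestronglyMeasurable
      · exact ((measurable_const.add (hm 0)).sub (hm 1)).norm
      · exact ((measurable_const.add (hm 0)).sub (hm 2)).norm
    refine Integrable.mono' Ibound hmeasf (Eventually.of_forall fun ω => ?_)
    have h1 : (0:ℝ) ≤ f1 ω := norm_nonneg _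
    have h2 : (0:ℝ) ≤ f2 ω := norm_nonneg _
    rw [Real.norm_eq_abs, abs_of_nonneg (mul_nonneg h1 h2)]
    nlinarith [sq_nonneg (f1 ω - f2 ω)]
  have hmono : ∫ ω, (f3 ω ^ 2 - f1 ω ^ 2 - f2 ω ^ 2) / 2 ∂P ≤ ∫ ω, f1 ω * f2 ω ∂P :=
    integral_mono Ilow Iprod hlow
  have hval : ∫ ω, (f3 ω ^ 2 - f1 ω ^ 2 - f2 ω ^ 2) / 2 ∂P
      = ((‖cij' - cij‖ ^ 2 + 2 * p * σ ^ 2) - (‖cij‖ ^ 2 + 2 * p * σ ^ 2)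
        - (‖cij'‖ ^ 2 + 2 * p * σ ^ 2)) / 2 := by
    rw [integral_div, integral_sub Ia I2, integral_sub I3 I1, E1, E2, E3]
  rw [ge_iff_le]
  refine le_trans (le_of_eq ?_) (le_trans (le_of_eq hval.symm) hmono)
  have h2 : Real.sqrt 2 ^ 2 = 2 := Real.sq_sqrt (by norm_num)
  have hσ' : σ ≠ 0 := ne_of_gt hσ
  rw [div_pow, div_pow, div_pow, mul_pow, h2]
  field_simp
  ring
end

section
/- Let W and M be nonempty finite sets of cardinalities n_W and n_M, let X_i ∈ ℝ^p for i ∈ W and Y_j ∈ ℝ^p for j ∈ M, let d_{ij} ∈ ℝ for i ∈ W, j ∈ M, let a > 0, and let B ∈ ℝ^p. Define C = (1/(n_W n_M)) Σ_{i ∈ W} Σ_{j ∈ M} (X_i − Y_j) and r² = | Σ_{i∈W} Σ_{j∈M} d_{ij}² / (a n_W n_M) − Σ_{i∈W} Σ_{j∈M} ‖X_i − Y_j‖₂² / (n_W n_M) + ‖ Σ_{i∈W} Σ_{j∈M} (X_i − Y_j) ‖₂² / (n_W² n_M²) |. If Σ_{i ∈ W} Σ_{j ∈ M} ( d_{ij}²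 − a ‖X_i − Y_j − B‖₂² ) = 0, then ‖B − C‖₂² ≤ r². -/
open Finset

theorem stmt_18 {W M : Type*} [Fintype W] [Fintype M] [Nonempty W] [Nonempty M]
    (p : ℕ) (hp : 1 ≤ p)
    (X : W → EuclideanSpace ℝ (Fin p)) (Y : M → EuclideanSpace ℝ (Fin p))
    (d : W → M → ℝ) (a : ℝ) (ha : 0 < a) (B : EuclideanSpace ℝ (Fin p))
    (C : EuclideanSpace ℝ (Fin p))
    (hC : C = ((Fintype.card W * Fintype.card M : ℝ))⁻¹ • ∑ i : W, ∑ j : M, (X i - Y j))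
    (r2 : ℝ)
    (hr2 : r2 = |(∑ i : W, ∑ j : M, d i j ^ 2) / (a * (Fintype.card W * Fintype.card M))
        - (∑ i : W, ∑ j : M, ‖X i - Y j‖ ^ 2) / (Fintype.card W * Fintype.card M)
        + ‖∑ i : W, ∑ j : M, (X i - Y j)‖ ^ 2
          / ((Fintype.card W : ℝ) ^ 2 * (Fintype.card M : ℝ) ^ 2)|)
    (hzero : ∑ i : W, ∑ j : M, (d i j ^ 2 - a * ‖X i - Y j - B‖ ^ 2) = 0) :
    ‖B - C‖ ^ 2 ≤ r2 := by
  have hnW : (0:ℝ) < (Fintype.card W : ℝ) := by exact_mod_cast Fintype.card_pos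
  have hnM : (0:ℝ) < (Fintype.card M : ℝ) := by exact_mod_cast Fintype.card_pos
  set nW : ℝ := (Fintype.card W : ℝ)
  set nM : ℝ := (Fintype.card M : ℝ)
  set S : EuclideanSpace ℝ (Fin p) := ∑ i : W, ∑ j : M, (X i - Y j) with hS
  set D : ℝ := ∑ i : W, ∑ j : M, d i j ^ 2 with hD
  set K : ℝ := ∑ i : W, ∑ j : M, ‖X i - Y j‖ ^ 2 with hK
  have hterm : ∀ i j, ‖X i - Y j - B‖ ^ 2
      = ‖X i - Y j‖ ^ 2 - 2 * (inner ℝ (X i - Y j) B : ℝ) + ‖B‖ ^ 2 := by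
    intro i j
    exact norm_sub_sq_real _ _
  have hexp : ∑ i : W, ∑ j : M, ‖X i - Y j - B‖ ^ 2
      = K - 2 * (inner ℝ S B : ℝ) + (nW * nM) * ‖B‖ ^ 2 := by
    simp only [hterm, Finset.sum_add_distrib, Finset.sum_sub_distrib, ← Finset.mul_sum,
      ← sum_inner, Finset.sum_const, Finset.card_univ, nsmul_eq_mul, hK, hS]
    ring
  have hz : D = a * (K - 2 * (inner ℝ S B : ℝ) + (nW * nM) * ‖B‖ ^ 2) := by
    rw [← hexp]
    have := hzero
    rw [Finset.sum_comm] at this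
    have h2 : ∑ i : W, ∑ j : M, (d i j ^ 2 - a * ‖X i - Y j - B‖ ^ 2)
        = D - a * ∑ i : W, ∑ j : M, ‖X i - Y j - B‖ ^ 2 := by
      simp [Finset.sum_sub_distrib, Finset.mul_sum, hD]
    rw [h2] at hzero
    linarith
  have hBC : ‖B - C‖ ^ 2
      = ‖B‖ ^ 2 - 2 * (nW * nM)⁻¹ * (inner ℝ S B : ℝ) + ((nW * nM)⁻¹) ^ 2 * ‖S‖ ^ 2 := by
    rw [hC]
    rw [norm_sub_sq_real]
    rw [real_inner_smul_right, norm_smul]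
    have habs : ‖((nW * nM : ℝ))⁻¹‖ = (nW * nM)⁻¹ := by
      rw [Real.norm_eq_abs, abs_of_pos]
      positivity
    rw [habs, real_inner_comm]
    ring
  rw [hr2]
  have hkey : ‖B - C‖ ^ 2
      = D / (a * (nW * nM)) - K / (nW * nM) + ‖S‖ ^ 2 / (nW ^ 2 * nM ^ 2) := by
    rw [hBC]
    have hane : a ≠ 0 := ne_of_gt ha
    have hWne : nW ≠ 0 := ne_of_gt hnW
    have hMne : nM ≠ 0 := ne_of_gt hnM
    rw [hz]
    field_simp
    ring
  rw [← hkey] at *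
  exact le_abs_self _
end
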